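/- A map f : L^m → L^m is a K-linear isometry of the Hamming space (i.e., K-linear, bijective, and distance-preserving) if and only if f is K-monomial, i.e., there exist π ∈ S_m and g_1, ..., g_m ∈ Aut_K(L) with f(u)_i = g_i(u_{π(i)}) for all u ∈ L^m and all i. -/
import Mathlib

theorem stmt_9 (K L : Type*) [Field K] [Fintype K] [Field L] [Fintype L]
    [Algebra K L] [DecidableEq L]
    (m : ℕ) (hm : 0 < m)
    (f : (Fin m → L) → (Fin m → L)) :
    (IsLinearMap K f ∧ Function.Bijective f ∧
      ∀ x y : Fin m → L, hammingDist (f x) (f y) = hammingDist x y) ↔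
    ∃ (π : Equiv.Perm (Fin m)) (g : Fin m → (L ≃ₗ[K] L)),
      ∀ (u : Fin m → L) (i : Fin m), f u i = g i (u (π i)) := by
  constructor
  · rintro ⟨hlin, hbij, hdist⟩
    set F : (Fin m → L) →ₗ[K] (Fin m → L) := IsLinearMap.mk' f hlin with hF
    have hfF : ∀ x, f x = F x := fun _ => rfl
    have hf0 : f 0 = 0 := by rw [hfF]; exact F.map_zero
    have hnorm : ∀ x, hammingNorm (f x) = hammingNorm x := by
      intro x
      have h := hdist x 0
      rwa [hf0, hammingDist_zero_right, hammingDist_zero_right] at h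
    -- norm of a single is 1
    have hns : ∀ (j : Fin m) (a : L), a ≠ 0 →
        hammingNorm (Pi.single j a : Fin m → L) = 1 := by
      intro j a ha
      have hset : (Finset.univ.filter fun i => (Pi.single j a : Fin m → L) i ≠ 0)
          = {j} := by
        ext i
        simp only [Finset.mem_filter, Finset.mem_univ, true_and, Finset.mem_singleton,
          Pi.single_apply]
        constructor
        · intro h; by_contra hij; simp [hij] at h
        · intro h; subst h; simpa using ha
      show (Finset.univ.filter fun i => (Pi.single j a : Fin m → L) i ≠ 0).card = 1
      rw [hset]; simp
    -- choose the support coordinate of f (single j 1)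
    have hsig : ∀ j : Fin m, ∃ i, ∀ k, f (Pi.single j 1) k ≠ 0 ↔ k = i := by
      intro j
      have h1 : (Finset.univ.filter fun k => f (Pi.single j (1:L)) k ≠ 0).card = 1 := by
        have := hnorm (Pi.single j (1:L))
        rw [hns j 1 one_ne_zero] at this
        exact this
      obtain ⟨i, hi⟩ := Finset.card_eq_one.mp h1
      refine ⟨i, fun k => ?_⟩
      constructor
      · intro hk
        have : k ∈ Finset.univ.filter fun k => f (Pi.single j (1:L)) k ≠ 0 := by
          simp [hk]
        rw [hi] at this; simpa using this
      · intro hk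
        have : k ∈ Finset.univ.filter fun k => f (Pi.single j (1:L)) k ≠ 0 := by
          rw [hi]; simp [hk]
        simpa using this
    choose σ hσ using hsig
    -- support lemma
    have hsupp : ∀ (j : Fin m) (a : L) (k : Fin m), k ≠ σ j →
        f (Pi.single j a) k = 0 := by
      intro j a k hk
      by_cases ha : a = 0
      · subst ha; rw [Pi.single_zero, hf0]; rfl
      by_cases hne : a = -1
      · subst hne
        have : (Pi.single j (-1 : L) : Fin m → L) = -(Pi.single j 1) := by
          rw [← Pi.single_neg]
        rw [this, hfF, F.map_neg]
        have h0 : f (Pi.single j (1:L)) k = 0 := by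
          by_contra h
          exact hk ((hσ j k).mp h)
        simp [← hfF, h0]
      · -- a ≠ 0, a ≠ -1
        have h1 : (Finset.univ.filter fun k => f (Pi.single j a) k ≠ 0).card = 1 := by
          have := hnorm (Pi.single j a); rw [hns j a ha] at this; exact this
        obtain ⟨i, hi⟩ := Finset.card_eq_one.mp h1
        have hmem : ∀ k', f (Pi.single j a) k' ≠ 0 ↔ k' = i := by
          intro k'
          constructor
          · intro h
            have : k' ∈ Finset.univ.filter fun k => f (Pi.single j a) k ≠ 0 := by simp [h]
            rw [hi] at this; simpa using this
          · intro h
            have : k' ∈ Finset.univ.filter fun k => f (Pi.single j a) k ≠ 0 := by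
              rw [hi]; simp [h]
            simpa using this
        have hiσ : i = σ j := by
          by_contra hiσ
          have ha1 : a + 1 ≠ 0 := by
            intro h; exact hne (by linear_combination h)
          have hadd : f (Pi.single j (a+1)) =
              f (Pi.single j a) + f (Pi.single j 1) := by
            rw [Pi.single_add, hfF, F.map_add, ← hfF, ← hfF]
          have hn1 : hammingNorm (f (Pi.single j (a+1))) = 1 := by
            rw [hnorm, hns j (a+1) ha1]
          have h2 : f (Pi.single j (a+1)) i ≠ 0 := by
            rw [hadd]
            have hz : f (Pi.single j (1:L)) i = 0 := by
              by_contra h; exact hiσ ((hσ j i).mp h)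
            have hnz : f (Pi.single j a) i ≠ 0 := (hmem i).mpr rfl
            simpa [hz] using hnz
          have h3 : f (Pi.single j (a+1)) (σ j) ≠ 0 := by
            rw [hadd]
            have hz : f (Pi.single j a) (σ j) = 0 := by
              by_contra h
              exact hiσ ((hmem (σ j)).mp h).symm
            have hnz : f (Pi.single j (1:L)) (σ j) ≠ 0 := (hσ j (σ j)).mpr rfl
            simpa [hz] using hnz
          have hsub : ({i, σ j} : Finset (Fin m)) ⊆
              Finset.univ.filter fun k => f (Pi.single j (a+1)) k ≠ 0 := by
            intro k hk
            simp only [Finset.mem_insert, Finset.mem_singleton] at hk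
            rcases hk with rfl | rfl <;> simp [h2, h3]
          have hcard : ({i, σ j} : Finset (Fin m)).card = 2 :=
            Finset.card_pair hiσ
          have := Finset.card_le_card hsub
          rw [hcard] at this
          have : (2 : ℕ) ≤ 1 := le_trans this (le_of_eq hn1)
          omega
        subst hiσ
        by_contra h
        exact hk ((hmem k).mp h)
    -- σ is injective
    have hσinj : Function.Injective σ := by
      intro j j' hjj
      by_contra hne
      set x : Fin m → L := Pi.single j 1 + Pi.single j' 1 with hx
      have hxn : hammingNorm x = 2 := by
        have hset : (Finset.univ.filter fun i => x i ≠ 0) = {j, j'} := by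
          ext i
          simp only [Finset.mem_filter, Finset.mem_univ, true_and, Finset.mem_insert,
            Finset.mem_singleton, hx, Pi.add_apply, Pi.single_apply]
          rcases eq_or_ne i j with rfl | hij
          · rcases eq_or_ne i j' with rfl | hij'
            · exact absurd rfl hne
            · simp [hij']
          · rcases eq_or_ne i j' with rfl | hij'
            · simp [hij]
            · simp [hij, hij']
        show (Finset.univ.filter fun i => x i ≠ 0).card = 2
        rw [hset]; exact Finset.card_pair hne
      have hfx : ∀ k, k ≠ σ j → f x k = 0 := by
        intro k hk
        have h1 : f (Pi.single j (1:L)) k = 0 := hsupp j 1 k hk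
        have h2 : f (Pi.single j' (1:L)) k = 0 := hsupp j' 1 k (hjj ▸ hk)
        rw [hx, hfF, F.map_add]
        simp [← hfF, h1, h2]
      have hle : hammingNorm (f x) ≤ 1 := by
        have hsub : (Finset.univ.filter fun k => f x k ≠ 0) ⊆ {σ j} := by
          intro k hk
          simp only [Finset.mem_filter, Finset.mem_univ, true_and] at hk
          simp only [Finset.mem_singleton]
          by_contra h
          exact hk (hfx k h)
        calc hammingNorm (f x) ≤ ({σ j} : Finset (Fin m)).card :=
              Finset.card_le_card hsub
          _ = 1 := by simp
      rw [hnorm, hxn] at hle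
      omega
    -- the permutation
    set e : Fin m ≃ Fin m := Equiv.ofBijective σ
      ((Finite.injective_iff_bijective).mp hσinj) with he
    set π : Equiv.Perm (Fin m) := e.symm with hπ
    have hσπ : ∀ i, σ (π i) = i := fun i => e.apply_symm_apply i
    -- the linear maps
    have hg0inj : ∀ i : Fin m, Function.Injective
        (fun a : L => f (Pi.single (π i) a) i) := by
      intro i a b hab
      have hsub : f (Pi.single (π i) (a - b)) = 0 := by
        funext k
        rcases eq_or_ne k i with rfl | hk
        · have : (Pi.single (π k) (a - b) : Fin m → L) =
              Pi.single (π k) a - Pi.single (π k) b := by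
            rw [Pi.single_sub]
          have hab' : f (Pi.single (π k) a) k = f (Pi.single (π k) b) k := hab
          rw [this, hfF, F.map_sub]
          simp only [Pi.sub_apply, ← hfF]
          rw [hab']; simp
        · have hkσ : k ≠ σ (π i) := by rw [hσπ]; exact hk
          exact hsupp (π i) (a - b) k hkσ
      have : Pi.single (π i) (a - b) = (0 : Fin m → L) := by
        apply hbij.injective
        rw [hsub, hf0]
      have h2 := congrFun this (π i)
      rw [Pi.single_eq_same] at h2
      have h3 : a - b = 0 := by simpa using h2
      exact sub_eq_zero.mp h3
    have hg0lin : ∀ i : Fin m, IsLinearMap K (fun a : L => f (Pi.single (π i) a) i) := by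
      intro i
      constructor
      · intro a b
        rw [Pi.single_add, hfF, F.map_add]
        simp [← hfF]
      · intro c a
        rw [Pi.single_smul, hfF, F.map_smul]
        simp [← hfF]
    refine ⟨π, fun i => LinearEquiv.ofBijective (IsLinearMap.mk' _ (hg0lin i))
      ⟨hg0inj i, (Finite.injective_iff_surjective).mp (hg0inj i)⟩, ?_⟩
    intro u i
    have hu : u = ∑ j, Pi.single j (u j) := (Finset.univ_sum_single u).symm
    have hsum : f u = ∑ j, f (Pi.single j (u j)) := by
      rw [hfF]
      conv_lhs => rw [hu]
      rw [map_sum]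
      simp [← hfF]
    have : f u i = ∑ j, f (Pi.single j (u j)) i := by
      rw [hsum, Finset.sum_apply]
    rw [this]
    rw [Finset.sum_eq_single (π i)]
    · rfl
    · intro j _ hj
      apply hsupp j (u j) i
      intro h
      apply hj
      have : σ j = σ (π i) := by rw [hσπ, h]
      exact hσinj this
    · intro h; exact absurd (Finset.mem_univ _) h
  · rintro ⟨π, g, hg⟩
    have hfx : ∀ x : Fin m → L, f x = fun i => g i (x (π i)) := by
      intro x; funext i; exact hg x i
    refine ⟨⟨?_, ?_⟩, ?_, ?_⟩
    · intro u v
      funext i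
      simp only [Pi.add_apply]
      rw [hg, hg, hg]
      simp [map_add]
    · intro c u
      funext i
      simp only [Pi.smul_apply]
      rw [hg, hg]
      simp [map_smul]
    · refine Function.bijective_iff_has_inverse.mpr
        ⟨fun v j => (g (π.symm j)).symm (v (π.symm j)), ?_, ?_⟩
      · intro u
        funext j
        simp only [hg]
        simp
      · intro v
        funext i
        rw [hg]
        simp
    · intro x y
      rw [hfx x, hfx y]
      have h1 : hammingDist (fun i => g i (x (π i))) (fun i => g i (y (π i)))
          = hammingDist (fun i => x (π i)) (fun i => y (π i)) :=
        hammingDist_comp (fun i a => g i a) (fun i => (g i).injective)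
      rw [h1]
      show (Finset.univ.filter fun i => x (π i) ≠ y (π i)).card
        = (Finset.univ.filter fun i => x i ≠ y i).card
      exact Finset.card_equiv π (by intro i; simp)
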